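/- arXiv:2005.02529 — 6 statements merged into one kernel-verified Lean document; each statement's English description precedes it below -/
import Mathlib

section
/- Let m, t be positive integers, let p_1, ..., p_m be distinct primes all at least n^{1/(t+1)}, and for each i in [n] define S_i ⊆ ⊔_{k=1}^m ℤ/p_kℤ as the set {(k, i mod p_k) : k ∈ [m]}. Then for all distinct i, j ∈ {1, ..., n}, |S_i ∩ S_j| ≤ t. -/
/-- the Nisan–Wigderson-style design built from residues modulo
distinct primes `p 1, …, p m`, each at least `n^{1/(t+1)}` (i.e. `p k ^ (t+1) ≥ n`),
has pairwise intersections of size at most `t`. -/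
theorem design_intersection_bound (m t n : ℕ) (hm : 0 < m) (ht : 0 < t)
    (p : Fin m → ℕ) (hp : ∀ k, Nat.Prime (p k)) (hinj : Function.Injective p)
    (hsize : ∀ k, n ≤ p k ^ (t + 1))
    (S : ℕ → Finset (Fin m × ℕ))
    (hS : ∀ i, S i = Finset.univ.image (fun k => (k, i % p k)))
    (i j : ℕ) (hi : i < n) (hj : j < n) (hij : i ≠ j) :
    (S i ∩ S j).card ≤ t := by
  by_contra hcon
  push_neg at hcon
  -- set of coordinates where residues agree
  have hmem : ∀ x ∈ S i ∩ S j, i % p x.1 = j % p x.1 ∧ x = (x.1, i % p x.1) := by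
    intro x hx
    rw [Finset.mem_inter, hS, hS] at hx
    obtain ⟨hx1, hx2⟩ := hx
    simp only [Finset.mem_image, Finset.mem_univ, true_and] at hx1 hx2
    obtain ⟨k, hk⟩ := hx1
    obtain ⟨k', hk'⟩ := hx2
    subst hk
    obtain ⟨h1, h2⟩ := Prod.mk.injEq .. ▸ hk'
    subst h1
    exact ⟨h2.symm, rfl⟩
  set K : Finset (Fin m) := (S i ∩ S j).image Prod.fst with hK
  have hcardK : t + 1 ≤ K.card := by
    have : (S i ∩ S j).card ≤ K.card := by
      apply Finset.card_le_card_of_injOn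
      · intro x hx; exact Finset.mem_image_of_mem _ hx
      · intro x hx y hy hxy
        have hxy' : x.1 = y.1 := hxy
        rw [(hmem x (Finset.mem_coe.mp hx)).2, (hmem y (Finset.mem_coe.mp hy)).2]
        simp [hxy']
    omega
  obtain ⟨K', hK'sub, hK'card⟩ := Finset.exists_subset_card_eq hcardK
  have hdvd : ∀ k ∈ K', (p k : ℤ) ∣ (i : ℤ) - j := by
    intro k hk
    obtain ⟨x, hx, hx1⟩ := Finset.mem_image.mp (hK'sub hk)
    have := (hmem x hx).1
    rw [hx1] at this
    exact dvd_sub_comm.mp (Nat.modEq_iff_dvd.mp this)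
  have hprod_dvd : (∏ k ∈ K', (p k : ℤ)) ∣ (i : ℤ) - j := by
    apply Finset.prod_dvd_of_coprime
    · intro a ha b hb hab
      have : Nat.Coprime (p a) (p b) := (Nat.coprime_primes (hp a) (hp b)).mpr
        (fun h => hab (hinj h))
      exact Int.isCoprime_iff_gcd_eq_one.mpr (by exact_mod_cast this)
    · exact hdvd
  have hprodn : n ≤ ∏ k ∈ K', p k := by
    have h1 : n ^ (t + 1) ≤ (∏ k ∈ K', p k) ^ (t + 1) := by
      rw [← Finset.prod_pow]
      calc n ^ (t + 1) = ∏ _k ∈ K', n := by rw [Finset.prod_const, hK'card]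
        _ ≤ ∏ k ∈ K', p k ^ (t + 1) := Finset.prod_le_prod (fun _ _ => Nat.zero_le _)
            (fun k _ => hsize k)
    exact le_of_pow_le_pow_left₀ (by omega) (Nat.zero_le _) h1
  have hne : (i : ℤ) - j ≠ 0 := by
    intro h; apply hij; exact_mod_cast sub_eq_zero.mp h
  have habs : |(i : ℤ) - j| < n := by
    rw [abs_lt]; constructor <;> [skip; skip] <;> push_cast <;> omega
  have hle : (∏ k ∈ K', (p k : ℤ)) ≤ |(i : ℤ) - j| :=
    Int.le_of_dvd (abs_pos.mpr hne) ((dvd_abs _ _).mpr hprod_dvd)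
  have : ((∏ k ∈ K', p k : ℕ) : ℤ) < n := by
    push_cast at hle ⊢; omega
  exact absurd hprodn (by exact_mod_cast not_le.mpr this)
end

section
/- Let G be a graph with n vertices and e edges, and let H be an edgeless graph on ℓ vertices. Then any clique partition of the join G * H (the graph obtained by adding all edges between V(G) and V(H)) has size at least nℓ − e. -/
/-- The join of a graph `G` on `Fin n` with the edgeless graph on `Fin ℓ`:
all edges of `G`, plus all edges between the two sides, and no edges inside
the second side. -/
def joinEdgeless {n ℓ : ℕ} (G : SimpleGraph (Fin n)) : SimpleGraph (Fin n ⊕ Fin ℓ) where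
  Adj u v :=
    match u, v with
    | Sum.inl a, Sum.inl b => G.Adj a b
    | Sum.inl _, Sum.inr _ => True
    | Sum.inr _, Sum.inl _ => True
    | Sum.inr _, Sum.inr _ => False
  symm := by
    constructor
    rintro (a | a) (b | b) h <;> simp_all
    all_goals exact h.symm
  loopless := by
    constructor
    rintro (a | a) h <;> simp_all

/-- `P` is a clique partition of `G`: a collection of cliques (each with at
least two vertices) such that every edge of `G` lies in exactly one member. -/
def IsCliquePartition {V : Type*} (G : SimpleGraph V) (P : Finset (Finset V)) : Prop :=
  (∀ s ∈ P, G.IsClique (s : Set V) ∧ 2 ≤ s.card) ∧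
    ∀ u v : V, G.Adj u v → ∃! s, s ∈ P ∧ u ∈ s ∧ v ∈ s

private def leftSet {n ℓ : ℕ} (s : Finset (Fin n ⊕ Fin ℓ)) : Finset (Fin n) :=
  s.filterMap Sum.getLeft? (by rintro (a|a) (b|b) c hc hc' <;> simp_all)

private lemma mem_leftSet {n ℓ : ℕ} {s : Finset (Fin n ⊕ Fin ℓ)} {x : Fin n} :
    x ∈ leftSet s ↔ Sum.inl x ∈ s := by
  simp only [leftSet, Finset.mem_filterMap]
  constructor
  · rintro ⟨(a|a), ha, h⟩ <;> simp_all
  · exact fun h => ⟨Sum.inl x, h, rfl⟩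

/-- any clique partition of the join `G * \overline{K_ℓ}` has size at
least `nℓ − e`, where `G` has `n` vertices and `e` edges. -/
theorem cliquePartition_join_lower_bound (n ℓ : ℕ) (G : SimpleGraph (Fin n))
    [DecidableRel G.Adj]
    (P : Finset (Finset (Fin n ⊕ Fin ℓ)))
    (hP : IsCliquePartition (joinEdgeless (ℓ := ℓ) G) P) :
    n * ℓ ≤ P.card + G.edgeFinset.card := by
  classical
  obtain ⟨hcl, huniq⟩ := hP
  have hex : ∀ (x : Fin n) (y : Fin ℓ), ∃ s, s ∈ P ∧ Sum.inl x ∈ s ∧ Sum.inr y ∈ s :=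
    fun x y => (huniq (Sum.inl x) (Sum.inr y) trivial).exists
  choose f hfP hfx hfy using hex
  -- each clique contains at most one right vertex
  have hright : ∀ s ∈ P, ∀ y y' : Fin ℓ, Sum.inr y ∈ s → Sum.inr y' ∈ s → y = y' := by
    intro s hs y y' hy hy'
    by_contra hne
    exact (hcl s hs).1 (Finset.mem_coe.2 hy) (Finset.mem_coe.2 hy')
      (fun h => hne (Sum.inr_injective h))
  -- two adjacent vertices lie in a unique clique
  have huniq' : ∀ u v : Fin n ⊕ Fin ℓ, (joinEdgeless (ℓ := ℓ) G).Adj u v →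
      ∀ s s', s ∈ P → s' ∈ P → u ∈ s → v ∈ s → u ∈ s' → v ∈ s' → s = s' := by
    intro u v h s s' hs hs' hus hvs hus' hvs'
    exact (huniq u v h).unique ⟨hs, hus, hvs⟩ ⟨hs', hus', hvs'⟩
  -- left vertices in the same clique are adjacent in G
  have hadjL : ∀ s ∈ P, ∀ a b : Fin n, a ≠ b → Sum.inl a ∈ s → Sum.inl b ∈ s →
      G.Adj a b := by
    intro s hs a b hne ha hb
    exact (hcl s hs).1 (Finset.mem_coe.2 ha) (Finset.mem_coe.2 hb)
      (fun h => hne (Sum.inl_injective h))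
  have hLne : ∀ p : Fin n × Fin ℓ, (leftSet (f p.1 p.2)).Nonempty :=
    fun p => ⟨p.1, mem_leftSet.2 (hfx p.1 p.2)⟩
  set m : Fin n × Fin ℓ → Fin n := fun p => (leftSet (f p.1 p.2)).min' (hLne p) with hm
  have hmmem : ∀ p : Fin n × Fin ℓ, Sum.inl (m p) ∈ f p.1 p.2 :=
    fun p => mem_leftSet.1 (Finset.min'_mem _ (hLne p))
  set φ : Fin n × Fin ℓ → (Finset (Fin n ⊕ Fin ℓ)) ⊕ Sym2 (Fin n) := fun p =>
    if p.1 = m p then Sum.inl (f p.1 p.2) else Sum.inr s(m p, p.1) with hφ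
  set T : Finset ((Finset (Fin n ⊕ Fin ℓ)) ⊕ Sym2 (Fin n)) :=
    P.map ⟨Sum.inl, Sum.inl_injective⟩ ∪ G.edgeFinset.map ⟨Sum.inr, Sum.inr_injective⟩
    with hT
  have hTcard : T.card = P.card + G.edgeFinset.card := by
    rw [hT, Finset.card_union_of_disjoint (by simp [Finset.disjoint_left]),
      Finset.card_map, Finset.card_map]
  have hmaps : ∀ p ∈ (Finset.univ : Finset (Fin n × Fin ℓ)), φ p ∈ T := by
    intro p _
    by_cases h : p.1 = m p
    · simp only [hφ, if_pos h, hT, Finset.mem_union]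
      exact Or.inl (Finset.mem_map.2 ⟨f p.1 p.2, hfP p.1 p.2, rfl⟩)
    · simp only [hφ, if_neg h, hT, Finset.mem_union]
      refine Or.inr (Finset.mem_map.2 ⟨s(m p, p.1), ?_, rfl⟩)
      rw [SimpleGraph.mem_edgeFinset, SimpleGraph.mem_edgeSet]
      exact hadjL _ (hfP p.1 p.2) _ _ (fun h' => h h'.symm) (hmmem p) (hfx p.1 p.2)
  have hinj : Set.InjOn φ (Finset.univ : Finset (Fin n × Fin ℓ)) := by
    intro p _ q _ hpq
    simp only [hφ] at hpq
    by_cases hp : p.1 = m p <;> by_cases hq : q.1 = m q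
    · -- both mapped to their cliques
      rw [if_pos hp, if_pos hq] at hpq
      have hs : f p.1 p.2 = f q.1 q.2 := Sum.inl_injective hpq
      have h1 : p.1 = q.1 := by
        rw [hp, hq, hm]
        simp only [hs]
      have h2 : p.2 = q.2 :=
        hright _ (hfP q.1 q.2) _ _ (hs ▸ hfy p.1 p.2) (hfy q.1 q.2)
      exact Prod.ext h1 h2
    · rw [if_pos hp, if_neg hq] at hpq; exact absurd hpq (by simp)
    · rw [if_neg hp, if_pos hq] at hpq; exact absurd hpq (by simp)
    · -- both mapped to edges
      rw [if_neg hp, if_neg hq] at hpq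
      have he : s(m p, p.1) = s(m q, q.1) := Sum.inr_injective hpq
      -- the edge in question lies in both cliques, so cliques coincide
      have hadj1 : G.Adj (m p) p.1 :=
        hadjL _ (hfP p.1 p.2) _ _ (fun h' => hp h'.symm) (hmmem p) (hfx p.1 p.2)
      have hmemq1 : Sum.inl (m q) ∈ f p.1 p.2 ∧ Sum.inl q.1 ∈ f p.1 p.2 := by
        rcases Sym2.eq_iff.1 he with ⟨h1, h2⟩ | ⟨h1, h2⟩
        · exact ⟨h1 ▸ hmmem p, h2 ▸ hfx p.1 p.2⟩
        · exact ⟨h2 ▸ hfx p.1 p.2, h1 ▸ hmmem p⟩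
      have hadj2 : G.Adj (m q) q.1 :=
        hadjL _ (hfP q.1 q.2) _ _ (fun h' => hq h'.symm) (hmmem q) (hfx q.1 q.2)
      have hs : f p.1 p.2 = f q.1 q.2 :=
        huniq' (Sum.inl (m q)) (Sum.inl q.1) hadj2 _ _ (hfP p.1 p.2) (hfP q.1 q.2)
          hmemq1.1 hmemq1.2 (hmmem q) (hfx q.1 q.2)
      have hmeq : m p = m q := by
        rw [hm]; simp only [hs]
      have h1 : p.1 = q.1 := by
        rcases Sym2.eq_iff.1 he with ⟨_, h2⟩ | ⟨h1', h2'⟩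
        · exact h2
        · exact absurd (h2'.trans hmeq.symm) hp
      have h2 : p.2 = q.2 :=
        hright _ (hfP q.1 q.2) _ _ (hs ▸ hfy p.1 p.2) (hfy q.1 q.2)
      exact Prod.ext h1 h2
  have key := Finset.card_le_card_of_injOn φ hmaps hinj
  rw [hTcard] at key
  simpa using key
end

section
/- Let t ≥ 1 and suppose a_1, b_1, ..., a_t, b_t are positive integers with Σ_{i=1}^t a_i b_i = L for some positive integer L. Then Σ_{i=1}^t (C(a_i, 2) + C(b_i, 2) + 1) ≥ (3/4) · L, with equality achievable when 4 divides L by taking all a_i = b_i = 2. -/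
open Finset

lemma two_mul_choose_two (n : ℕ) : 2 * Nat.choose n 2 = n * (n - 1) := by
  induction n with
  | zero => rfl
  | succ m ih =>
    rw [Nat.choose_succ_succ, Nat.choose_one_right]
    cases m with
    | zero => rfl
    | succ k => rw [Nat.mul_add, ih]; simp; ring

lemma pointwise_cost (a b : ℕ) (ha : 0 < a) (hb : 0 < b) :
    3 * (a * b) ≤ 4 * (Nat.choose a 2 + Nat.choose b 2 + 1) := by
  have h1 := two_mul_choose_two a
  have h2 := two_mul_choose_two b
  obtain ⟨x, rfl⟩ := Nat.exists_eq_add_of_lt ha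
  obtain ⟨y, rfl⟩ := Nat.exists_eq_add_of_lt hb
  simp only [Nat.add_sub_cancel] at h1 h2
  rcases Nat.eq_zero_or_pos x with rfl | hx
  · rcases Nat.eq_zero_or_pos y with rfl | hy
    · simp
    · nlinarith
  · rcases Nat.eq_zero_or_pos y with rfl | hy
    · nlinarith
    · obtain ⟨u, rfl⟩ := Nat.exists_eq_add_of_lt hx
      obtain ⟨v, rfl⟩ := Nat.exists_eq_add_of_lt hy
      nlinarith [two_mul_le_add_sq u v, sq_nonneg u, sq_nonneg v, Nat.zero_le (u*v)]

/-- if `a i, b i` are positive integers with `Σ a i * b i = L > 0`,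
then `Σ (C(a i, 2) + C(b i, 2) + 1) ≥ (3/4) L`, with equality when all
`a i = b i = 2` (possible whenever `4 ∣ L`). -/
theorem crossing_clique_cost_bound (t L : ℕ) (ht : 1 ≤ t) (hL : 0 < L)
    (a b : Fin t → ℕ) (ha : ∀ i, 0 < a i) (hb : ∀ i, 0 < b i)
    (hsum : ∑ i, a i * b i = L) :
    3 * L ≤ 4 * ∑ i, (Nat.choose (a i) 2 + Nat.choose (b i) 2 + 1) ∧
      ((∀ i, a i = 2 ∧ b i = 2) →
        4 * ∑ i, (Nat.choose (a i) 2 + Nat.choose (b i) 2 + 1) = 3 * L) ∧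
      (∀ L' : ℕ, 0 < L' → 4 ∣ L' →
        ∃ (t' : ℕ) (a' b' : Fin t' → ℕ), (∀ i, a' i = 2 ∧ b' i = 2) ∧
          ∑ i, a' i * b' i = L' ∧
          4 * ∑ i, (Nat.choose (a' i) 2 + Nat.choose (b' i) 2 + 1) = 3 * L') := by
  refine ⟨?_, ?_, ?_⟩
  · calc 3 * L = ∑ i, 3 * (a i * b i) := by rw [← Finset.mul_sum, hsum]
      _ ≤ ∑ i, 4 * (Nat.choose (a i) 2 + Nat.choose (b i) 2 + 1) :=
          Finset.sum_le_sum fun i _ => pointwise_cost _ _ (ha i) (hb i)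
      _ = 4 * ∑ i, (Nat.choose (a i) 2 + Nat.choose (b i) 2 + 1) := (Finset.mul_sum _ _ _).symm
  · intro h
    have h1 : ∀ i ∈ Finset.univ, Nat.choose (a i) 2 + Nat.choose (b i) 2 + 1 = 3 := by
      intro i _; rw [(h i).1, (h i).2]; rfl
    have h2 : ∀ i ∈ Finset.univ, a i * b i = 4 := by
      intro i _; rw [(h i).1, (h i).2]
    rw [Finset.sum_congr rfl h1, ← hsum, Finset.sum_congr rfl h2]
    simp [Finset.sum_const]; ring
  · intro L' hL' hdvd
    obtain ⟨k, rfl⟩ := hdvd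
    refine ⟨k, fun _ => 2, fun _ => 2, fun i => ⟨rfl, rfl⟩, ?_, ?_⟩ <;>
      simp [Finset.sum_const] <;> ring
end

section
/- Fix r ≥ 3 and define f_r(n) as the minimum over graphs G on n vertices of ν_r(G) + ν_r(complement of G), where ν_r(G) is the maximum value of Σ_H (C(|H|,2) − 1)ψ(H) over fractional packings ψ of copies of K_3, ..., K_r in G. Then the sequence f_r(n) / (n(n−1)) is monotonically nondecreasing in n. -/
open Finset

/-- `ψ` is a fractional packing of cliques of sizes `3, …, r` in `G`:
weights lie in `[0,1]`, are supported on cliques of `G` with between `3` and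
`r` vertices, and the total weight through each edge is at most `1`. -/
def IsFracCliquePacking {n : ℕ} (r : ℕ) (G : SimpleGraph (Fin n))
    (ψ : Finset (Fin n) → ℝ) : Prop :=
  (∀ s, 0 ≤ ψ s ∧ ψ s ≤ 1) ∧
  (∀ s, ψ s ≠ 0 → G.IsClique (s : Set (Fin n)) ∧ 3 ≤ s.card ∧ s.card ≤ r) ∧
  (∀ u v : Fin n, G.Adj u v →
    ∑ s ∈ Finset.univ.filter (fun s : Finset (Fin n) => u ∈ s ∧ v ∈ s), ψ s ≤ 1)

/-- `ν_r(G)`: the optimal value of `Σ_H (C(|H|,2) − 1) ψ(H)` over fractional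
packings `ψ` of `K_3, …, K_r` in `G`. -/
noncomputable def nuR (r n : ℕ) (G : SimpleGraph (Fin n)) : ℝ :=
  sSup {x : ℝ | ∃ ψ, IsFracCliquePacking r G ψ ∧
    x = ∑ s : Finset (Fin n), ((s.card.choose 2 : ℝ) - 1) * ψ s}

/-- `f_r(n) = min_G ν_r(G) + ν_r(Gᶜ)` over graphs on `n` vertices. -/
noncomputable def fR (r n : ℕ) : ℝ :=
  sInf {x : ℝ | ∃ G : SimpleGraph (Fin n), x = nuR r n G + nuR r n Gᶜ}

/-! ### Auxiliary lemmas -/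

namespace FRAux

def nuSet (r m : ℕ) (G : SimpleGraph (Fin m)) : Set ℝ :=
  {x : ℝ | ∃ ψ, IsFracCliquePacking r G ψ ∧
    x = ∑ s : Finset (Fin m), ((s.card.choose 2 : ℝ) - 1) * ψ s}

lemma nuR_eq (r m : ℕ) (G : SimpleGraph (Fin m)) : nuR r m G = sSup (nuSet r m G) := rfl

lemma zero_packing (r m : ℕ) (G : SimpleGraph (Fin m)) :
    IsFracCliquePacking r G (fun _ => 0) := by
  refine ⟨fun s => by norm_num, fun s hs => absurd rfl hs, fun u v _ => by simp⟩

lemma zero_mem_nuSet (r m : ℕ) (G : SimpleGraph (Fin m)) : (0:ℝ) ∈ nuSet r m G :=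
  ⟨fun _ => 0, zero_packing r m G, by simp⟩

lemma nuSet_nonempty (r m : ℕ) (G : SimpleGraph (Fin m)) : (nuSet r m G).Nonempty :=
  ⟨0, zero_mem_nuSet r m G⟩

lemma nuSet_bddAbove (r m : ℕ) (G : SimpleGraph (Fin m)) : BddAbove (nuSet r m G) := by
  refine ⟨∑ s : Finset (Fin m), (s.card.choose 2 : ℝ), ?_⟩
  rintro x ⟨ψ, hψ, rfl⟩
  apply Finset.sum_le_sum
  intro s _
  obtain ⟨h0, h1⟩ := hψ.1 s
  nlinarith [Nat.cast_nonneg (α := ℝ) (s.card.choose 2)]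

lemma value_mem (r m : ℕ) (G : SimpleGraph (Fin m)) {ψ} (hψ : IsFracCliquePacking r G ψ) :
    (∑ s : Finset (Fin m), ((s.card.choose 2 : ℝ) - 1) * ψ s) ∈ nuSet r m G :=
  ⟨ψ, hψ, rfl⟩

lemma value_le_nuR (r m : ℕ) (G : SimpleGraph (Fin m)) {ψ} (hψ : IsFracCliquePacking r G ψ) :
    (∑ s : Finset (Fin m), ((s.card.choose 2 : ℝ) - 1) * ψ s) ≤ nuR r m G :=
  le_csSup (nuSet_bddAbove r m G) (value_mem r m G hψ)

lemma nuR_nonneg (r m : ℕ) (G : SimpleGraph (Fin m)) : 0 ≤ nuR r m G :=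
  le_csSup (nuSet_bddAbove r m G) (zero_mem_nuSet r m G)

lemma comap_compl {n m : ℕ} {f : Fin n → Fin m} (hf : Function.Injective f)
    (G : SimpleGraph (Fin m)) :
    (SimpleGraph.comap f G)ᶜ = SimpleGraph.comap f Gᶜ := by
  ext a b
  simp only [SimpleGraph.compl_adj, SimpleGraph.comap_adj, ne_eq, hf.ne_iff]

/-! ### lift of a packing along an embedding -/

variable {n : ℕ}

noncomputable def lift (e : Fin n ↪ Fin (n+1)) (ψ : Finset (Fin n) → ℝ)
    (t : Finset (Fin (n+1))) : ℝ :=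
  ∑ s ∈ Finset.univ.filter (fun s : Finset (Fin n) => s.map e = t), ψ s

lemma lift_nonneg {e : Fin n ↪ Fin (n+1)} {ψ : Finset (Fin n) → ℝ} {t : Finset (Fin (n+1))}
    (h0 : ∀ s, 0 ≤ ψ s) : 0 ≤ lift e ψ t :=
  Finset.sum_nonneg fun s _ => h0 s

lemma lift_le_one {e : Fin n ↪ Fin (n+1)} {ψ : Finset (Fin n) → ℝ} {t : Finset (Fin (n+1))} (h1 : ∀ s, ψ s ≤ 1) (h0 : ∀ s, 0 ≤ ψ s) :
    lift e ψ t ≤ 1 := by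
  have hcard : (Finset.univ.filter (fun s : Finset (Fin n) => s.map e = t)).card ≤ 1 := by
    apply Finset.card_le_one.mpr
    intro a ha b hb
    simp only [Finset.mem_filter] at ha hb
    exact Finset.map_injective e (ha.2.trans hb.2.symm)
  calc lift e ψ t ≤ (Finset.univ.filter (fun s : Finset (Fin n) => s.map e = t)).card • (1:ℝ) :=
        Finset.sum_le_card_nsmul _ _ _ fun s _ => h1 s
    _ ≤ 1 • (1:ℝ) := by
        refine nsmul_le_nsmul_left (by norm_num) hcard
    _ = 1 := by norm_num

lemma lift_eq_zero {v : Fin (n+1)} {ψ} {t : Finset (Fin (n+1))} (hv : v ∈ t) :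
    lift ⟨v.succAbove, Fin.succAbove_right_injective⟩ ψ t = 0 := by
  apply Finset.sum_eq_zero
  intro s hs
  simp only [Finset.mem_filter] at hs
  exfalso
  have : v ∈ s.map ⟨v.succAbove, Fin.succAbove_right_injective⟩ := hs.2 ▸ hv
  obtain ⟨i, _, hi⟩ := Finset.mem_map.mp this
  exact Fin.succAbove_ne v i hi

lemma lift_value (e : Fin n ↪ Fin (n+1)) (ψ : Finset (Fin n) → ℝ) :
    ∑ t : Finset (Fin (n+1)), ((t.card.choose 2 : ℝ) - 1) * lift e ψ t
      = ∑ s : Finset (Fin n), ((s.card.choose 2 : ℝ) - 1) * ψ s := by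
  unfold lift
  rw [← Finset.sum_fiberwise_of_maps_to (g := fun s : Finset (Fin n) => s.map e)
    (t := Finset.univ) (fun _ _ => Finset.mem_univ _)
    (fun s => ((s.card.choose 2 : ℝ) - 1) * ψ s)]
  refine Finset.sum_congr rfl fun t _ => ?_
  rw [Finset.mul_sum]
  refine Finset.sum_congr rfl fun s hs => ?_
  simp only [Finset.mem_filter] at hs
  rw [← hs.2, Finset.card_map]

lemma lift_support {e : Fin n ↪ Fin (n+1)} {G : SimpleGraph (Fin (n+1))} {r : ℕ} {ψ}
    (hψ : IsFracCliquePacking r (G.comap e) ψ) {t : Finset (Fin (n+1))}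
    (ht : lift e ψ t ≠ 0) :
    G.IsClique (t : Set (Fin (n+1))) ∧ 3 ≤ t.card ∧ t.card ≤ r := by
  obtain ⟨s, hs, hsne⟩ := Finset.exists_ne_zero_of_sum_ne_zero ht
  simp only [Finset.mem_filter] at hs
  obtain ⟨-, rfl⟩ := hs
  obtain ⟨hclique, h3, hr⟩ := hψ.2.1 s hsne
  refine ⟨?_, by simpa using h3, by simpa using hr⟩
  intro a ha b hb hab
  simp only [Finset.coe_map, Set.mem_image, Finset.mem_coe] at ha hb
  obtain ⟨a', ha', rfl⟩ := ha
  obtain ⟨b', hb', rfl⟩ := hb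
  have hne : a' ≠ b' := fun h => hab (by rw [h])
  exact hclique ha' hb' hne

lemma lift_edge_sum {e : Fin n ↪ Fin (n+1)} {ψ : Finset (Fin n) → ℝ}
    {a b : Fin (n+1)} {u w : Fin n} (ha : e u = a) (hb : e w = b) :
    ∑ t ∈ Finset.univ.filter (fun t : Finset (Fin (n+1)) => a ∈ t ∧ b ∈ t), lift e ψ t
      = ∑ s ∈ Finset.univ.filter (fun s : Finset (Fin n) => u ∈ s ∧ w ∈ s), ψ s := by
  unfold lift
  rw [Finset.sum_fiberwise_eq_sum_filter]
  refine Finset.sum_congr ?_ fun _ _ => rfl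
  ext s
  simp only [Finset.mem_filter, Finset.mem_univ, true_and, ← ha, ← hb, Finset.mem_map']

end FRAux

open FRAux in
/-- The averaging step. -/
lemma sum_nuR_comap_le (r n : ℕ) (hn : 2 ≤ n) (G : SimpleGraph (Fin (n+1))) :
    ∑ v : Fin (n+1), nuR r n (G.comap (Fin.succAbove v))
      ≤ ((n:ℝ) - 1) * nuR r (n+1) G := by
  have hn1 : (0:ℝ) < (n:ℝ) - 1 := by
    have : (2:ℝ) ≤ n := by exact_mod_cast hn
    linarith
  apply le_of_forall_pos_le_add
  intro ε hε
  have hεn : 0 < ε / (n+1 : ℝ) := by positivity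
  have hex : ∀ v : Fin (n+1), ∃ ψ, IsFracCliquePacking r (G.comap (Fin.succAbove v)) ψ ∧
      nuR r n (G.comap (Fin.succAbove v)) - ε / (n+1 : ℝ)
        ≤ ∑ s : Finset (Fin n), ((s.card.choose 2 : ℝ) - 1) * ψ s := by
    intro v
    have hlt : nuR r n (G.comap (Fin.succAbove v)) - ε / (n+1:ℝ)
        < sSup (nuSet r n (G.comap (Fin.succAbove v))) := by
      rw [← nuR_eq]; linarith
    obtain ⟨x, ⟨ψ, hψ, rfl⟩, hx⟩ :=
      exists_lt_of_lt_csSup (nuSet_nonempty r n _) hlt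
    exact ⟨ψ, hψ, le_of_lt hx⟩
  choose ψs hpack hval using hex
  set emb : Fin (n+1) → (Fin n ↪ Fin (n+1)) :=
    fun v => ⟨Fin.succAbove v, Fin.succAbove_right_injective⟩ with hemb
  set Ψ : Finset (Fin (n+1)) → ℝ :=
    fun t => ((n:ℝ) - 1)⁻¹ * ∑ v : Fin (n+1), lift (emb v) (ψs v) t with hΨ
  have hpack' : ∀ v, IsFracCliquePacking r (G.comap (emb v)) (ψs v) := fun v => hpack v
  -- Ψ is a packing of G
  have hΨpack : IsFracCliquePacking r G Ψ := by
    have hΨ0 : ∀ t, 0 ≤ Ψ t := fun t => by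
      apply mul_nonneg (by positivity)
      exact Finset.sum_nonneg fun v _ => lift_nonneg (fun s => (hpack' v).1 s |>.1)
    have hsum_le : ∀ t, ∑ v : Fin (n+1), lift (emb v) (ψs v) t ≤ (n:ℝ) - 1 := by
      intro t
      by_cases hz : ∀ v : Fin (n+1), lift (emb v) (ψs v) t = 0
      · rw [Finset.sum_eq_zero fun v _ => hz v]; linarith
      · push_neg at hz
        obtain ⟨v₀, hv₀⟩ := hz
        have h3 : 3 ≤ t.card := (lift_support (hpack' v₀) hv₀).2.1
        have hfilter : ∑ v : Fin (n+1), lift (emb v) (ψs v) t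
            = ∑ v ∈ Finset.univ.filter (fun v => v ∉ t), lift (emb v) (ψs v) t := by
          symm
          apply Finset.sum_filter_of_ne
          intro v _ hne hv
          exact hne (lift_eq_zero hv)
        rw [hfilter]
        have hcard : (Finset.univ.filter (fun v : Fin (n+1) => v ∉ t)).card = n + 1 - t.card := by
          have : Finset.univ.filter (fun v : Fin (n+1) => v ∉ t) = tᶜ := by
            ext v; simp
          rw [this, Finset.card_compl, Fintype.card_fin]
        calc ∑ v ∈ Finset.univ.filter (fun v : Fin (n+1) => v ∉ t), lift (emb v) (ψs v) t
            ≤ (Finset.univ.filter (fun v : Fin (n+1) => v ∉ t)).card • (1:ℝ) :=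
              Finset.sum_le_card_nsmul _ _ _ fun v _ =>
                lift_le_one (fun s => (hpack' v).1 s |>.2) (fun s => (hpack' v).1 s |>.1)
          _ = ((n + 1 - t.card : ℕ) : ℝ) := by rw [hcard]; simp
          _ ≤ (n:ℝ) - 1 := by
              have hle : n + 1 - t.card ≤ n - 2 := by omega
              have : ((n + 1 - t.card : ℕ) : ℝ) ≤ ((n - 2 : ℕ) : ℝ) := by exact_mod_cast hle
              have h2 : ((n - 2 : ℕ) : ℝ) = (n:ℝ) - 2 := by
                have : (2:ℕ) ≤ n := hn
                push_cast [Nat.cast_sub hn]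
                ring
              linarith
    refine ⟨fun t => ⟨hΨ0 t, ?_⟩, ?_, ?_⟩
    · -- Ψ t ≤ 1
      have := hsum_le t
      rw [hΨ]
      calc ((n:ℝ) - 1)⁻¹ * ∑ v : Fin (n+1), lift (emb v) (ψs v) t
          ≤ ((n:ℝ) - 1)⁻¹ * ((n:ℝ) - 1) := by
            apply mul_le_mul_of_nonneg_left this (by positivity)
        _ = 1 := inv_mul_cancel₀ (ne_of_gt hn1)
    · -- support
      intro t ht
      have : ∑ v : Fin (n+1), lift (emb v) (ψs v) t ≠ 0 := by
        intro h; apply ht; rw [hΨ]; simp [h]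
      obtain ⟨v, _, hv⟩ := Finset.exists_ne_zero_of_sum_ne_zero this
      exact lift_support (hpack' v) hv
    · -- edge condition
      intro a b hab
      have hswap : ∑ t ∈ Finset.univ.filter (fun t : Finset (Fin (n+1)) => a ∈ t ∧ b ∈ t), Ψ t
          = ((n:ℝ) - 1)⁻¹ * ∑ v : Fin (n+1),
              ∑ t ∈ Finset.univ.filter (fun t : Finset (Fin (n+1)) => a ∈ t ∧ b ∈ t),
                lift (emb v) (ψs v) t := by
        rw [hΨ, ← Finset.mul_sum, Finset.sum_comm]
      rw [hswap]
      have hinner : ∀ v : Fin (n+1),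
          ∑ t ∈ Finset.univ.filter (fun t : Finset (Fin (n+1)) => a ∈ t ∧ b ∈ t),
            lift (emb v) (ψs v) t
          = if v = a ∨ v = b then 0 else
              ∑ t ∈ Finset.univ.filter (fun t : Finset (Fin (n+1)) => a ∈ t ∧ b ∈ t),
                lift (emb v) (ψs v) t := by
        intro v
        split_ifs with h
        · apply Finset.sum_eq_zero
          intro t ht
          simp only [Finset.mem_filter] at ht
          rcases h with rfl | rfl
          · exact lift_eq_zero ht.2.1
          · exact lift_eq_zero ht.2.2
        · rfl
      have hboundv : ∀ v : Fin (n+1), v ≠ a → v ≠ b →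
          ∑ t ∈ Finset.univ.filter (fun t : Finset (Fin (n+1)) => a ∈ t ∧ b ∈ t),
            lift (emb v) (ψs v) t ≤ 1 := by
        intro v hva hvb
        obtain ⟨u, hu⟩ := Fin.exists_succAbove_eq (Ne.symm hva)
        obtain ⟨w, hw⟩ := Fin.exists_succAbove_eq (Ne.symm hvb)
        have hu' : (emb v) u = a := hu
        have hw' : (emb v) w = b := hw
        rw [lift_edge_sum (e := emb v) (ψ := ψs v) hu' hw']
        apply (hpack' v).2.2 u w
        show G.Adj ((emb v) u) ((emb v) w)
        show G.Adj (Fin.succAbove v u) (Fin.succAbove v w)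
        rw [hu, hw]; exact hab
      have hsumv : ∑ v : Fin (n+1),
          ∑ t ∈ Finset.univ.filter (fun t : Finset (Fin (n+1)) => a ∈ t ∧ b ∈ t),
            lift (emb v) (ψs v) t ≤ (n:ℝ) - 1 := by
        have hsub : ∑ v : Fin (n+1),
            ∑ t ∈ Finset.univ.filter (fun t : Finset (Fin (n+1)) => a ∈ t ∧ b ∈ t),
              lift (emb v) (ψs v) t
            = ∑ v ∈ Finset.univ \ {a, b},
              ∑ t ∈ Finset.univ.filter (fun t : Finset (Fin (n+1)) => a ∈ t ∧ b ∈ t),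
                lift (emb v) (ψs v) t := by
          symm
          apply Finset.sum_subset (Finset.subset_univ _)
          intro v _ hv
          simp only [Finset.mem_sdiff, Finset.mem_univ, true_and, not_not,
            Finset.mem_insert, Finset.mem_singleton] at hv
          rw [hinner v, if_pos hv]
        rw [hsub]
        have hcard : (Finset.univ \ ({a, b} : Finset (Fin (n+1)))).card = n - 1 := by
          rw [Finset.card_sdiff_of_subset (Finset.subset_univ _), Finset.card_pair hab.ne,
            Finset.card_univ, Fintype.card_fin]
          omega
        calc ∑ v ∈ Finset.univ \ {a, b},
              ∑ t ∈ Finset.univ.filter (fun t : Finset (Fin (n+1)) => a ∈ t ∧ b ∈ t),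
                lift (emb v) (ψs v) t
            ≤ (Finset.univ \ ({a, b} : Finset (Fin (n+1)))).card • (1:ℝ) := by
              apply Finset.sum_le_card_nsmul
              intro v hv
              simp only [Finset.mem_sdiff, Finset.mem_univ, true_and, Finset.mem_insert,
                Finset.mem_singleton, not_or] at hv
              exact hboundv v hv.1 hv.2
          _ = ((n - 1 : ℕ) : ℝ) := by rw [hcard]; simp
          _ ≤ (n:ℝ) - 1 := by
              rw [Nat.cast_sub (by omega)]; norm_num
      calc ((n:ℝ) - 1)⁻¹ * ∑ v : Fin (n+1),
            ∑ t ∈ Finset.univ.filter (fun t : Finset (Fin (n+1)) => a ∈ t ∧ b ∈ t),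
              lift (emb v) (ψs v) t
          ≤ ((n:ℝ) - 1)⁻¹ * ((n:ℝ) - 1) :=
            mul_le_mul_of_nonneg_left hsumv (by positivity)
        _ = 1 := inv_mul_cancel₀ (ne_of_gt hn1)
  -- now compute value of Ψ
  have h1 : ∀ t : Finset (Fin (n+1)), ((t.card.choose 2 : ℝ) - 1) * Ψ t
      = ∑ v : Fin (n+1), ((n:ℝ) - 1)⁻¹ *
          (((t.card.choose 2 : ℝ) - 1) * lift (emb v) (ψs v) t) := by
    intro t
    rw [hΨ]
    show ((t.card.choose 2 : ℝ) - 1) * (((n:ℝ) - 1)⁻¹ * ∑ v : Fin (n+1), lift (emb v) (ψs v) t)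
      = _
    rw [Finset.mul_sum, Finset.mul_sum]
    exact Finset.sum_congr rfl fun v _ => by ring
  have hΨval : ∑ t : Finset (Fin (n+1)), ((t.card.choose 2 : ℝ) - 1) * Ψ t
      = ((n:ℝ) - 1)⁻¹ * ∑ v : Fin (n+1),
          ∑ s : Finset (Fin n), ((s.card.choose 2 : ℝ) - 1) * (ψs v) s := by
    calc ∑ t : Finset (Fin (n+1)), ((t.card.choose 2 : ℝ) - 1) * Ψ t
        = ∑ t : Finset (Fin (n+1)), ∑ v : Fin (n+1), ((n:ℝ) - 1)⁻¹ *
            (((t.card.choose 2 : ℝ) - 1) * lift (emb v) (ψs v) t) :=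
          Finset.sum_congr rfl fun t _ => h1 t
      _ = ∑ v : Fin (n+1), ∑ t : Finset (Fin (n+1)), ((n:ℝ) - 1)⁻¹ *
            (((t.card.choose 2 : ℝ) - 1) * lift (emb v) (ψs v) t) := Finset.sum_comm
      _ = ∑ v : Fin (n+1), ((n:ℝ) - 1)⁻¹ *
            ∑ t : Finset (Fin (n+1)), ((t.card.choose 2 : ℝ) - 1) * lift (emb v) (ψs v) t :=
          Finset.sum_congr rfl fun v _ => (Finset.mul_sum _ _ _).symm
      _ = ((n:ℝ) - 1)⁻¹ * ∑ v : Fin (n+1),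
            ∑ t : Finset (Fin (n+1)), ((t.card.choose 2 : ℝ) - 1) * lift (emb v) (ψs v) t :=
          (Finset.mul_sum _ _ _).symm
      _ = ((n:ℝ) - 1)⁻¹ * ∑ v : Fin (n+1),
            ∑ s : Finset (Fin n), ((s.card.choose 2 : ℝ) - 1) * (ψs v) s := by
          congr 1
          exact Finset.sum_congr rfl fun v _ => lift_value (emb v) (ψs v)
  have hvalsum : ∑ v : Fin (n+1), ∑ s : Finset (Fin n), ((s.card.choose 2 : ℝ) - 1) * (ψs v) s
      = ((n:ℝ) - 1) * ∑ t : Finset (Fin (n+1)), ((t.card.choose 2 : ℝ) - 1) * Ψ t := by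
    rw [hΨval, ← mul_assoc, mul_inv_cancel₀ (ne_of_gt hn1), one_mul]
  have hΨle : ∑ t : Finset (Fin (n+1)), ((t.card.choose 2 : ℝ) - 1) * Ψ t ≤ nuR r (n+1) G :=
    value_le_nuR r (n+1) G hΨpack
  have hstep : ∑ v : Fin (n+1), nuR r n (G.comap (Fin.succAbove v))
      ≤ ∑ v : Fin (n+1), (∑ s : Finset (Fin n), ((s.card.choose 2 : ℝ) - 1) * (ψs v) s)
        + (n+1 : ℝ) * (ε / (n+1 : ℝ)) := by
    have := Finset.sum_le_sum (s := (Finset.univ : Finset (Fin (n+1))))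
      (f := fun v => nuR r n (G.comap (Fin.succAbove v)))
      (g := fun v => (∑ s : Finset (Fin n), ((s.card.choose 2 : ℝ) - 1) * (ψs v) s)
        + ε / (n+1 : ℝ)) (fun v _ => by linarith [hval v])
    rw [Finset.sum_add_distrib, Finset.sum_const, Finset.card_univ, Fintype.card_fin] at this
    convert this using 2
    · rfl
    push_cast
    ring
  have hne : ((n:ℝ) + 1) ≠ 0 := by positivity
  have heps : (n+1 : ℝ) * (ε / (n+1 : ℝ)) = ε := by field_simp
  rw [heps] at hstep
  rw [hvalsum] at hstep
  have : ((n:ℝ) - 1) * ∑ t : Finset (Fin (n+1)), ((t.card.choose 2 : ℝ) - 1) * Ψ t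
      ≤ ((n:ℝ) - 1) * nuR r (n+1) G :=
    mul_le_mul_of_nonneg_left hΨle (le_of_lt hn1)
  linarith

namespace FRAux

def fRSet (r m : ℕ) : Set ℝ :=
  {x : ℝ | ∃ G : SimpleGraph (Fin m), x = nuR r m G + nuR r m Gᶜ}

lemma fR_eq (r m : ℕ) : fR r m = sInf (fRSet r m) := rfl

lemma fRSet_nonempty (r m : ℕ) : (fRSet r m).Nonempty := ⟨_, ⊥, rfl⟩

lemma fRSet_bddBelow (r m : ℕ) : BddBelow (fRSet r m) := by
  refine ⟨0, ?_⟩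
  rintro x ⟨G, rfl⟩
  have := nuR_nonneg r m G
  have := nuR_nonneg r m Gᶜ
  linarith

lemma fR_nonneg (r m : ℕ) : 0 ≤ fR r m := by
  rw [fR_eq]
  apply le_csInf (fRSet_nonempty r m)
  rintro x ⟨G, rfl⟩
  have := nuR_nonneg r m G
  have := nuR_nonneg r m Gᶜ
  linarith

lemma fR_le (r m : ℕ) (G : SimpleGraph (Fin m)) : fR r m ≤ nuR r m G + nuR r m Gᶜ :=
  csInf_le (fRSet_bddBelow r m) ⟨G, rfl⟩

end FRAux

open FRAux in
lemma fR_key (r n : ℕ) (hn : 2 ≤ n) :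
    ((n:ℝ) + 1) * fR r n ≤ ((n:ℝ) - 1) * fR r (n+1) := by
  have hn1 : (0:ℝ) < (n:ℝ) - 1 := by
    have : (2:ℝ) ≤ n := by exact_mod_cast hn
    linarith
  have hkey : ∀ G : SimpleGraph (Fin (n+1)),
      ((n:ℝ) + 1) * fR r n ≤ ((n:ℝ) - 1) * (nuR r (n+1) G + nuR r (n+1) Gᶜ) := by
    intro G
    have h1 : ∑ v : Fin (n+1), nuR r n (G.comap (Fin.succAbove v))
        ≤ ((n:ℝ) - 1) * nuR r (n+1) G := sum_nuR_comap_le r n hn G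
    have h2 : ∑ v : Fin (n+1), nuR r n (Gᶜ.comap (Fin.succAbove v))
        ≤ ((n:ℝ) - 1) * nuR r (n+1) Gᶜ := sum_nuR_comap_le r n hn Gᶜ
    have h3 : ((n:ℝ) + 1) * fR r n
        ≤ ∑ v : Fin (n+1), (nuR r n (G.comap (Fin.succAbove v))
            + nuR r n ((G.comap (Fin.succAbove v))ᶜ)) := by
      have := Finset.card_nsmul_le_sum (Finset.univ : Finset (Fin (n+1)))
        (fun v => nuR r n (G.comap (Fin.succAbove v))
          + nuR r n ((G.comap (Fin.succAbove v))ᶜ)) (fR r n)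
        (fun v _ => fR_le r n _)
      rw [Finset.card_univ, Fintype.card_fin, nsmul_eq_mul] at this
      convert this using 2
      · rfl
      push_cast; ring
    have h4 : ∀ v : Fin (n+1),
        (G.comap (Fin.succAbove v))ᶜ = Gᶜ.comap (Fin.succAbove v) := fun v =>
      comap_compl (Fin.succAbove_right_injective) G
    simp only [h4] at h3
    rw [Finset.sum_add_distrib] at h3
    linarith
  have : ((n:ℝ) + 1) * fR r n / ((n:ℝ) - 1) ≤ fR r (n+1) := by
    rw [fR_eq]
    apply le_csInf (fRSet_nonempty r (n+1))
    rintro x ⟨G, rfl⟩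
    rw [div_le_iff₀ hn1]
    calc ((n:ℝ) + 1) * fR r n ≤ ((n:ℝ) - 1) * (nuR r (n+1) G + nuR r (n+1) Gᶜ) := hkey G
      _ = (nuR r (n+1) G + nuR r (n+1) Gᶜ) * ((n:ℝ) - 1) := by ring
  rw [div_le_iff₀ hn1] at this
  linarith

/-- for fixed `r ≥ 3`, the sequence `f_r(n) / (n(n−1))` is
monotonically nondecreasing in `n`. -/
theorem fR_div_monotone (r : ℕ) (hr : 3 ≤ r) :
    ∀ n : ℕ, 2 ≤ n →
      fR r n / (n * (n - 1) : ℝ) ≤ fR r (n + 1) / ((n + 1) * n : ℝ) := by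
  intro n hn
  have hn2 : (2:ℝ) ≤ (n:ℝ) := by exact_mod_cast hn
  have hp1 : (0:ℝ) < (n:ℝ) * ((n:ℝ) - 1) := by nlinarith
  have hp2 : (0:ℝ) < ((n:ℝ) + 1) * (n:ℝ) := by nlinarith
  rw [div_le_div_iff₀ hp1 hp2]
  have hk := fR_key r n hn
  nlinarith [hk, hn2]
end

section
/- In any 2-edge-coloring of K_20 with a red copy N of K_5 and no blue copy of K_4, if some vertex v has at least nine red neighbors and at least nine blue neighbors, then K_20 contains two vertex-disjoint red copies of K_4. -/
open Finset

/-- `s` is monochromatic of color `col` under the edge-coloring `c`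
(`true` = red, `false` = blue). -/
def IsMonoColor {N : ℕ} (c : Fin N → Fin N → Bool) (col : Bool)
    (s : Finset (Fin N)) : Prop :=
  ∀ u ∈ s, ∀ v ∈ s, u ≠ v → c u v = col

lemma mono_subset {N : ℕ} {c : Fin N → Fin N → Bool} {col : Bool}
    {s t : Finset (Fin N)} (h : t ⊆ s) (hs : IsMonoColor c col s) :
    IsMonoColor c col t := fun u hu w hw => hs u (h hu) w (h hw)

lemma edge_or_mono {N : ℕ} (c : Fin N → Fin N → Bool) (col : Bool)
    (T : Finset (Fin N)) :
    (∃ a ∈ T, ∃ b ∈ T, a ≠ b ∧ c a b = col) ∨ IsMonoColor c (!col) T := by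
  by_cases h : ∃ a ∈ T, ∃ b ∈ T, a ≠ b ∧ c a b = col
  · exact Or.inl h
  · right
    push_neg at h
    intro u hu w hw huw
    have := h u hu w hw huw
    cases hcw : c u w <;> cases col <;> simp_all

lemma mono_insert {N : ℕ} {c : Fin N → Fin N → Bool}
    (hsymm : ∀ u v, c u v = c v u) {col : Bool} {v : Fin N}
    {T : Finset (Fin N)} (hT : IsMonoColor c col T)
    (h : ∀ u ∈ T, c v u = col) : IsMonoColor c col (insert v T) := by
  intro a ha b hb hab
  rcases Finset.mem_insert.1 ha with h1 | h1 <;>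
    rcases Finset.mem_insert.1 hb with h2 | h2
  · exact absurd (h1.trans h2.symm) hab
  · rw [h1]; exact h b h2
  · rw [h2, hsymm]; exact h a h1
  · exact hT a h1 b h2 hab

lemma filter_bool_card {α : Type*} (E : Finset α) (f : α → Bool) :
    (E.filter (fun u => f u = true)).card +
      (E.filter (fun u => f u = false)).card = E.card := by
  rw [← Finset.card_filter_add_card_filter_not
    (p := fun u => f u = true) (s := E)]
  congr 1
  apply congrArg
  apply Finset.filter_congr
  intro x _
  simp

lemma pair_mono {N : ℕ} {c : Fin N → Fin N → Bool}
    (hsymm : ∀ u v, c u v = c v u) {col : Bool} {a b : Fin N}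
    (hab : c a b = col) : IsMonoColor c col ({a, b} : Finset (Fin N)) := by
  intro u hu w hw huw
  simp only [Finset.mem_insert, Finset.mem_singleton] at hu hw
  rcases hu with rfl | rfl <;> rcases hw with rfl | rfl
  · exact absurd rfl huw
  · exact hab
  · rw [hsymm]; exact hab
  · exact absurd rfl huw

/-- From a vertex with ≥3 neighbors of color `col`, get a `col` triangle
using `v` or a `!col` triangle inside the neighborhood. -/
lemma step3 {N : ℕ} {c : Fin N → Fin N → Bool}
    (hsymm : ∀ u v, c u v = c v u) (col : Bool) (v : Fin N)
    (T : Finset (Fin N)) (hvT : v ∉ T) (hnbr : ∀ u ∈ T, c v u = col)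
    (hT : 3 ≤ T.card) :
    (∃ t ⊆ insert v T, t.card = 3 ∧ IsMonoColor c col t) ∨
      (∃ t ⊆ T, t.card = 3 ∧ IsMonoColor c (!col) t) := by
  rcases edge_or_mono c col T with ⟨a, ha, b, hb, hab, hcab⟩ | hmono
  · left
    refine ⟨insert v {a, b}, ?_, ?_, ?_⟩
    · intro x hx
      rcases Finset.mem_insert.1 hx with rfl | hx
      · exact Finset.mem_insert_self _ _
      · simp only [Finset.mem_insert, Finset.mem_singleton] at hx
        rcases hx with rfl | rfl <;> exact Finset.mem_insert_of_mem ‹_›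
    · have hva : v ≠ a := fun h => hvT (h ▸ ha)
      have hvb : v ≠ b := fun h => hvT (h ▸ hb)
      rw [Finset.card_insert_of_notMem (by simp [hva, hvb]),
        Finset.card_insert_of_notMem (by simp [hab]), Finset.card_singleton]
    · exact mono_insert hsymm (pair_mono hsymm hcab) (by
        intro u hu
        simp only [Finset.mem_insert, Finset.mem_singleton] at hu
        rcases hu with rfl | rfl
        · exact hnbr _ ha
        · exact hnbr _ hb)
  · right
    obtain ⟨t, hts, htc⟩ := Finset.exists_subset_card_eq hT
    exact ⟨t, hts, htc, mono_subset hts hmono⟩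

/-- Ramsey `R(3,3) ≤ 6`. -/
lemma ramsey33 {N : ℕ} (c : Fin N → Fin N → Bool)
    (hsymm : ∀ u v, c u v = c v u) (S : Finset (Fin N)) (hS : 6 ≤ S.card) :
    (∃ t ⊆ S, t.card = 3 ∧ IsMonoColor c true t) ∨
      (∃ t ⊆ S, t.card = 3 ∧ IsMonoColor c false t) := by
  have hpos : 0 < S.card := by omega
  obtain ⟨v, hv⟩ := Finset.card_pos.1 hpos
  set E := S.erase v with hE
  have hEcard : 5 ≤ E.card := by
    rw [hE, Finset.card_erase_of_mem hv]; omega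
  set R := E.filter (fun u => c v u = true) with hR
  set B := E.filter (fun u => c v u = false) with hB
  have hsum : R.card + B.card = E.card := by
    rw [hR, hB]
    exact filter_bool_card E (c v)
  have hins : ∀ (X : Finset (Fin N)), X ⊆ E → insert v X ⊆ S := by
    intro X hX x hx
    rcases Finset.mem_insert.1 hx with rfl | hx
    · exact hv
    · exact Finset.erase_subset _ _ (hX hx)
  rcases le_or_gt 3 R.card with h3 | h3
  · rcases step3 hsymm true v R (fun h => (Finset.mem_erase.1
        (Finset.filter_subset _ _ h)).1 rfl)
      (fun u hu => (Finset.mem_filter.1 hu).2) h3 with ⟨t, ht, htc, htm⟩ | ⟨t, ht, htc, htm⟩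
    · exact Or.inl ⟨t, ht.trans (hins R (Finset.filter_subset _ _)), htc, htm⟩
    · exact Or.inr ⟨t, fun x hx => Finset.erase_subset _ _
        (Finset.filter_subset _ _ (ht hx)), htc, htm⟩
  · have h3B : 3 ≤ B.card := by omega
    rcases step3 hsymm false v B (fun h => (Finset.mem_erase.1
        (Finset.filter_subset _ _ h)).1 rfl)
      (fun u hu => (Finset.mem_filter.1 hu).2) h3B with ⟨t, ht, htc, htm⟩ | ⟨t, ht, htc, htm⟩
    · exact Or.inr ⟨t, ht.trans (hins B (Finset.filter_subset _ _)), htc, htm⟩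
    · exact Or.inl ⟨t, fun x hx => Finset.erase_subset _ _
        (Finset.filter_subset _ _ (ht hx)), htc, htm⟩

/-- Ramsey `R(3,4) ≤ 9`, exact-card version. -/
lemma ramsey34' (c : Fin 20 → Fin 20 → Bool)
    (hsymm : ∀ u v, c u v = c v u) (S : Finset (Fin 20)) (hS : S.card = 9) :
    (∃ t ⊆ S, t.card = 3 ∧ IsMonoColor c true t) ∨
      (∃ t ⊆ S, t.card = 4 ∧ IsMonoColor c false t) := by
  by_cases hA : ∃ v ∈ S, 4 ≤ ((S.erase v).filter (fun u => c v u = true)).card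
  · obtain ⟨v, hv, h4⟩ := hA
    obtain ⟨T, hTsub, hTc⟩ := Finset.exists_subset_card_eq h4
    have hTE : ∀ u ∈ T, u ∈ S.erase v ∧ c v u = true := fun u hu =>
      Finset.mem_filter.1 (hTsub hu)
    rcases edge_or_mono c true T with ⟨a, ha, b, hb, hab, hcab⟩ | hmono
    · left
      refine ⟨insert v {a, b}, ?_, ?_, ?_⟩
      · intro x hx
        rcases Finset.mem_insert.1 hx with rfl | hx
        · exact hv
        · simp only [Finset.mem_insert, Finset.mem_singleton] at hx
          rcases hx with rfl | rfl <;>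
            exact Finset.erase_subset _ _ (hTE _ ‹_›).1
      · have hva : v ≠ a := fun h => (Finset.mem_erase.1 (hTE a ha).1).1 h.symm
        have hvb : v ≠ b := fun h => (Finset.mem_erase.1 (hTE b hb).1).1 h.symm
        rw [Finset.card_insert_of_notMem (by simp [hva, hvb]),
          Finset.card_insert_of_notMem (by simp [hab]), Finset.card_singleton]
      · exact mono_insert hsymm (pair_mono hsymm hcab) (by
          intro u hu
          simp only [Finset.mem_insert, Finset.mem_singleton] at hu
          rcases hu with rfl | rfl
          · exact (hTE _ ha).2
          · exact (hTE _ hb).2)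
    · right
      exact ⟨T, fun x hx => Finset.erase_subset _ _ (hTE x hx).1, hTc,
        by simpa using hmono⟩
  by_cases hB : ∃ v ∈ S, 6 ≤ ((S.erase v).filter (fun u => c v u = false)).card
  · obtain ⟨v, hv, h6⟩ := hB
    set B := (S.erase v).filter (fun u => c v u = false) with hBdef
    have hBE : ∀ u ∈ B, u ∈ S.erase v ∧ c v u = false := fun u hu =>
      Finset.mem_filter.1 hu
    rcases ramsey33 c hsymm B h6 with ⟨t, ht, htc, htm⟩ | ⟨t, ht, htc, htm⟩
    · exact Or.inl ⟨t, fun x hx => Finset.erase_subset _ _ (hBE x (ht hx)).1,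
        htc, htm⟩
    · right
      refine ⟨insert v t, ?_, ?_, ?_⟩
      · intro x hx
        rcases Finset.mem_insert.1 hx with rfl | hx
        · exact hv
        · exact Finset.erase_subset _ _ (hBE x (ht hx)).1
      · rw [Finset.card_insert_of_notMem
          (fun h => (Finset.mem_erase.1 (hBE v (ht h)).1).1 rfl), htc]
      · exact mono_insert hsymm htm (fun u hu => (hBE u (ht hu)).2)
  · exfalso
    push_neg at hA hB
    -- Every vertex of `S` has exactly 3 red neighbors in `S`.
    have hdeg3 : ∀ v ∈ S,
        ((S.erase v).filter (fun u => c v u = true)).card = 3 := by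
      intro v hv
      have h1 := hA v hv
      have h2 := hB v hv
      have hsum : ((S.erase v).filter (fun u => c v u = true)).card +
          ((S.erase v).filter (fun u => c v u = false)).card
          = (S.erase v).card := filter_bool_card _ (c v)
      have hec : (S.erase v).card = 8 := by
        rw [Finset.card_erase_of_mem hv, hS]
      omega
    -- Build the red graph restricted to `S` and use the handshake lemma.
    let G : SimpleGraph (Fin 20) :=
      { Adj := fun u w => u ∈ S ∧ w ∈ S ∧ u ≠ w ∧ c u w = true
        symm := by
          refine ⟨?_⟩; intro u w ⟨h1, h2, h3, h4⟩
          exact ⟨h2, h1, h3.symm, (hsymm w u).trans h4⟩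
        loopless := by refine ⟨?_⟩; intro u ⟨_, _, h, _⟩; exact h rfl }
    haveI : DecidableRel G.Adj := fun u w => by
      unfold G; simp only; infer_instance
    have hdeg : ∀ v, G.degree v = if v ∈ S then 3 else 0 := by
      intro v
      rw [← SimpleGraph.card_neighborFinset_eq_degree]
      by_cases hv : v ∈ S
      · rw [if_pos hv, ← hdeg3 v hv]
        congr 1
        ext u
        simp only [SimpleGraph.mem_neighborFinset, Finset.mem_filter,
          Finset.mem_erase]
        constructor
        · rintro ⟨_, hu, hne, hc⟩
          exact ⟨⟨fun h => hne h.symm, hu⟩, hc⟩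
        · rintro ⟨⟨hne, hu⟩, hc⟩
          exact ⟨hv, hu, fun h => hne h.symm, hc⟩
      · rw [if_neg hv]
        rw [Finset.card_eq_zero]
        ext u
        simp only [SimpleGraph.mem_neighborFinset, Finset.notMem_empty,
          iff_false]
        rintro ⟨h, -⟩
        exact hv h
    have hhs := SimpleGraph.sum_degrees_eq_twice_card_edges G
    have hsum27 : ∑ v : Fin 20, G.degree v = 27 := by
      calc ∑ v : Fin 20, G.degree v
          = ∑ v : Fin 20, if v ∈ S then 3 else 0 := by
            exact Finset.sum_congr rfl fun v _ => hdeg v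
        _ = ∑ v ∈ S, 3 := by rw [Finset.sum_ite_mem, Finset.univ_inter]
        _ = 27 := by rw [Finset.sum_const, hS]; rfl
    omega

/-- Ramsey `R(3,4) ≤ 9`. -/
lemma ramsey34 (c : Fin 20 → Fin 20 → Bool)
    (hsymm : ∀ u v, c u v = c v u) (S : Finset (Fin 20)) (hS : 9 ≤ S.card) :
    (∃ t ⊆ S, t.card = 3 ∧ IsMonoColor c true t) ∨
      (∃ t ⊆ S, t.card = 4 ∧ IsMonoColor c false t) := by
  obtain ⟨S', hS'sub, hS'c⟩ := Finset.exists_subset_card_eq hS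
  rcases ramsey34' c hsymm S' hS'c with ⟨t, ht, htc, htm⟩ | ⟨t, ht, htc, htm⟩
  · exact Or.inl ⟨t, ht.trans hS'sub, htc, htm⟩
  · exact Or.inr ⟨t, ht.trans hS'sub, htc, htm⟩

/-- in a 2-edge-coloring of `K_20` with a red `K_5` and no blue
`K_4`, if some vertex `v` has at least nine red neighbors and at least nine
blue neighbors, then there are two vertex-disjoint red copies of `K_4`. -/
theorem two_disjoint_red_K4_of_balanced_vertex (c : Fin 20 → Fin 20 → Bool)
    (hsymm : ∀ u v, c u v = c v u)
    (N : Finset (Fin 20)) (hN : N.card = 5) (hNred : IsMonoColor c true N)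
    (hnoblue : ¬ ∃ s : Finset (Fin 20), s.card = 4 ∧ IsMonoColor c false s)
    (v : Fin 20)
    (hred : 9 ≤ (Finset.univ.filter (fun u => u ≠ v ∧ c v u = true)).card)
    (hblue : 9 ≤ (Finset.univ.filter (fun u => u ≠ v ∧ c v u = false)).card) :
    ∃ s₁ s₂ : Finset (Fin 20), s₁.card = 4 ∧ s₂.card = 4 ∧
      IsMonoColor c true s₁ ∧ IsMonoColor c true s₂ ∧ Disjoint s₁ s₂ := by
  set R := Finset.univ.filter (fun u => u ≠ v ∧ c v u = true) with hRdef
  set B := Finset.univ.filter (fun u => u ≠ v ∧ c v u = false) with hBdef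
  have hRmem : ∀ u ∈ R, u ≠ v ∧ c v u = true := fun u hu =>
    (Finset.mem_filter.1 hu).2
  have hBmem : ∀ u ∈ B, u ≠ v ∧ c v u = false := fun u hu =>
    (Finset.mem_filter.1 hu).2
  -- Red `K_3` inside the red neighborhood.
  have hs1 : ∃ t ⊆ R, t.card = 3 ∧ IsMonoColor c true t := by
    rcases ramsey34 c hsymm R hred with h | ⟨t, ht, htc, htm⟩
    · exact h
    · exact absurd ⟨t, htc, htm⟩ hnoblue
  -- Red `K_4` inside the blue neighborhood, via the swapped coloring.
  have hs2 : ∃ t ⊆ B, t.card = 4 ∧ IsMonoColor c true t := by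
    have hsymm' : ∀ u w, (!(c u w)) = (!(c w u)) := fun u w => by
      rw [hsymm]
    rcases ramsey34 (fun u w => !(c u w)) hsymm' B hblue with
      ⟨t, ht, htc, htm⟩ | ⟨t, ht, htc, htm⟩
    · -- blue triangle in `B` gives a blue `K_4` with `v`: contradiction
      exfalso
      apply hnoblue
      refine ⟨insert v t, ?_, ?_⟩
      · rw [Finset.card_insert_of_notMem (fun h => (hBmem v (ht h)).1 rfl),
          htc]
      · refine mono_insert hsymm ?_ (fun u hu => (hBmem u (ht hu)).2)
        intro a ha b hb hab
        have := htm a ha b hb hab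
        exact Bool.not_eq_true' .. |>.mp this
    · refine ⟨t, ht, htc, ?_⟩
      intro a ha b hb hab
      have := htm a ha b hb hab
      simpa using this
  obtain ⟨t₁, ht₁R, ht₁c, ht₁m⟩ := hs1
  obtain ⟨t₂, ht₂B, ht₂c, ht₂m⟩ := hs2
  refine ⟨insert v t₁, t₂, ?_, ht₂c, ?_, ht₂m, ?_⟩
  · rw [Finset.card_insert_of_notMem (fun h => (hRmem v (ht₁R h)).1 rfl),
      ht₁c]
  · exact mono_insert hsymm ht₁m (fun u hu => (hRmem u (ht₁R hu)).2)
  · rw [Finset.disjoint_left]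
    intro a ha₁ ha₂
    have hb := hBmem a (ht₂B ha₂)
    rcases Finset.mem_insert.1 ha₁ with rfl | ha₁
    · exact hb.1 rfl
    · have hr := hRmem a (ht₁R ha₁)
      rw [hr.2] at hb
      exact Bool.noConfusion hb.2
end

section
/- Let H_ℓ(G) be the graph built from a graph G on m vertices by joining G completely to two edgeless sets of ℓ vertices, each of which is in turn completely joined to its own clique K_ℓ, with the two cliques K_ℓ completely joined to each other (as in the de Caen–Erdős–Pullman–Wormald construction). Then the complement of H_ℓ(G) is isomorphic to H_ℓ(complement of G). In particular, if G is self-complementary then so is H_ℓ(G). -/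
/-- Vertices of `H_ℓ(G)`: the vertices of `G` together with four blocks of
size `ℓ`, encoded as `(side, copy, index)` where `side = false` for the
edgeless blocks `A₁, A₂` and `side = true` for the clique blocks `B₁, B₂`,
and `copy : Bool` distinguishes the two copies. -/
abbrev HVert (m ℓ : ℕ) := Fin m ⊕ (Bool × Bool × Fin ℓ)

/-- One direction of the edge relation of `H_ℓ(G)`:
`G` is joined completely to `A₁` and `A₂`; `Aᵢ` is joined completely to `Bᵢ`;
`B₁` and `B₂` are cliques completely joined to each other; no other edges. -/
def HRel {m ℓ : ℕ} (G : SimpleGraph (Fin m)) : HVert m ℓ → HVert m ℓ → Prop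
  | Sum.inl i, Sum.inl j => G.Adj i j
  | Sum.inl _, Sum.inr (s, _, _) => s = false
  | Sum.inr (s₁, c₁, _), Sum.inr (s₂, c₂, _) =>
      (s₁ = false ∧ s₂ = true ∧ c₁ = c₂) ∨ (s₁ = true ∧ s₂ = true)
  | Sum.inr _, Sum.inl _ => False

/-- The de Caen–Erdős–Pullman–Wormald graph `H_ℓ(G)`. -/
def HGraph {m : ℕ} (ℓ : ℕ) (G : SimpleGraph (Fin m)) : SimpleGraph (HVert m ℓ) :=
  SimpleGraph.fromRel (HRel G)

/-- The vertex bijection exchanging the `A` blocks with the `B` blocks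
(crosswise), fixing the vertices of `G`. -/
def flipV (m ℓ : ℕ) : HVert m ℓ ≃ HVert m ℓ where
  toFun
    | Sum.inl i => Sum.inl i
    | Sum.inr (s, c, k) => Sum.inr (!s, if s then c else !c, k)
  invFun
    | Sum.inl i => Sum.inl i
    | Sum.inr (s, c, k) => Sum.inr (!s, if s then !c else c, k)
  left_inv := by rintro (i | ⟨s, c, k⟩) <;> [skip; cases s] <;> simp
  right_inv := by rintro (i | ⟨s, c, k⟩) <;> [skip; cases s] <;> simp

/-- The complement of `H_ℓ(G)` is isomorphic to `H_ℓ(Gᶜ)`. -/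
def HGraph_compl (m ℓ : ℕ) (G : SimpleGraph (Fin m)) :
    (HGraph ℓ G)ᶜ ≃g HGraph ℓ Gᶜ where
  toEquiv := flipV m ℓ
  map_rel_iff' := by
    rintro (i | ⟨s, c, k⟩) (j | ⟨s', c', k'⟩) <;>
      simp only [flipV, Equiv.coe_fn_mk, HGraph, SimpleGraph.compl_adj,
        SimpleGraph.fromRel_adj, HRel, ne_eq, Sum.inl.injEq, Sum.inr.injEq,
        Sum.inl_ne_inr, Sum.inr_ne_inl, not_false_eq_true, true_and,
        Prod.mk.injEq, SimpleGraph.compl_adj]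
    · rw [show (j = i) ↔ (i = j) from eq_comm]; tauto
    · cases s' <;> simp
    · cases s <;> simp
    · cases s <;> cases s' <;> cases c <;> cases c' <;> simp_all [eq_comm]

/-- `H_ℓ` is functorial in graph isomorphisms. -/
def HGraph_congr (m ℓ : ℕ) (G G' : SimpleGraph (Fin m)) (e : G ≃g G') :
    HGraph ℓ G ≃g HGraph ℓ G' where
  toEquiv := Equiv.sumCongr e.toEquiv (Equiv.refl _)
  map_rel_iff' := by
    rintro (i | ⟨s, c, k⟩) (j | ⟨s', c', k'⟩) <;>
      simp [HGraph, HRel, e.map_rel_iff, e.toEquiv.injective.ne_iff]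

/-- the complement of `H_ℓ(G)` is isomorphic to `H_ℓ(Gᶜ)`; in
particular, if `G` is self-complementary then so is `H_ℓ(G)`. -/
theorem HGraph_compl_iso (m ℓ : ℕ) (G : SimpleGraph (Fin m)) :
    Nonempty ((HGraph ℓ G)ᶜ ≃g HGraph ℓ Gᶜ) ∧
      (Nonempty (G ≃g Gᶜ) → Nonempty (HGraph ℓ G ≃g (HGraph ℓ G)ᶜ)) := by
  refine ⟨⟨HGraph_compl m ℓ G⟩, ?_⟩
  rintro ⟨e⟩
  exact ⟨(HGraph_congr m ℓ G Gᶜ e).trans (HGraph_compl m ℓ G).symm⟩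
end
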